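/- For every real α ≥ 2 and every real x > 0, the function f(x) = ((x+2)^α − x^α)/(x+1)^{α−1} is decreasing; in particular ((n+2)^α − n^α)/(n+1)^{α−1} ≥ ((n+3)^α − (n+1)^α)/(n+2)^{α−1} for all integers n ≥ 1. -/

import Mathlib

open intervalIntegral MeasureTheory

lemma key_ineq (α x : ℝ) (hα : 2 ≤ α) (hx : 0 < x) :
    α * (x + 1) * ((x + 2) ^ (α - 1) - x ^ (α - 1)) ≤ (α - 1) * ((x + 2) ^ α - x ^ α) := by
  have hα0 : (0:ℝ) < α := by linarith
  have hα1 : (0:ℝ) < α - 1 := by linarith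
  set g : ℝ → ℝ := fun t => t ^ (α - 2) * (t - (x + 1)) with hg
  have hgc : ContinuousOn g (Set.Ici x) := by
    apply ContinuousOn.mul
    · exact ContinuousOn.rpow_const continuousOn_id (fun t _ => Or.inr (by linarith))
    · fun_prop
  have hint : ∀ a b : ℝ, x ≤ a → x ≤ b → IntervalIntegrable g volume a b := by
    intro a b ha hb
    apply (hgc.mono ?_).intervalIntegrable
    intro y hy
    rcases Set.mem_uIcc.mp hy with ⟨h, _⟩ | ⟨h, _⟩ <;> simp [Set.mem_Ici] <;> linarith
  have h1 : IntervalIntegrable g volume x (x+1) := hint _ _ le_rfl (by linarith)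
  have h2 : IntervalIntegrable g volume (x+1) (x+2) := hint _ _ (by linarith) (by linarith)
  have hsplit : (∫ t in x..(x+1), g t) + (∫ t in (x+1)..(x+2), g t) = ∫ t in x..(x+2), g t :=
    integral_add_adjacent_intervals h1 h2
  have hrefl : (∫ t in (x+1)..(x+2), g (2*(x+1) - t)) = ∫ t in x..(x+1), g t := by
    rw [intervalIntegral.integral_comp_sub_left g (2*(x+1)),
      show 2*(x+1) - (x+2) = x from by ring, show 2*(x+1) - (x+1) = x+1 from by ring]
  have h2' : IntervalIntegrable (fun t => g (2*(x+1) - t)) volume (x+1) (x+2) := by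
    have := h1.comp_sub_left (2*(x+1))
    rw [show 2*(x+1) - x = x + 2 from by ring, show 2*(x+1) - (x+1) = x+1 from by ring] at this
    exact this.symm
  have hnn : 0 ≤ ∫ t in (x+1)..(x+2), (g (2*(x+1) - t) + g t) := by
    apply intervalIntegral.integral_nonneg (by linarith)
    intro u hu
    obtain ⟨hu1, hu2⟩ := hu
    have hbase1 : (0:ℝ) < 2*(x+1) - u := by linarith
    have hpow : (2*(x+1) - u) ^ (α - 2) ≤ u ^ (α - 2) :=
      Real.rpow_le_rpow (by linarith) (by linarith) (by linarith)
    have he : g (2*(x+1) - u) + g u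
        = (u - (x+1)) * (u ^ (α-2) - (2*(x+1) - u) ^ (α-2)) := by
      simp only [hg]; ring
    rw [he]
    exact mul_nonneg (by linarith) (by linarith)
  have htotal : 0 ≤ ∫ t in x..(x+2), g t := by
    rw [← hsplit, ← hrefl, ← intervalIntegral.integral_add h2' h2]
    exact hnn
  have hcongr : ∫ t in x..(x+2), g t
      = (∫ t in x..(x+2), t ^ (α-1)) - (x+1) * ∫ t in x..(x+2), t ^ (α-2) := by
    rw [← intervalIntegral.integral_const_mul, ← intervalIntegral.integral_sub]
    · apply intervalIntegral.integral_congr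
      intro t ht
      rw [Set.uIcc_of_le (by linarith : x ≤ x + 2)] at ht
      have ht0 : (0:ℝ) < t := lt_of_lt_of_le hx ht.1
      have he : t ^ (α - 1) = t ^ (α-2) * t := by
        rw [show α - 1 = α - 2 + 1 from by ring, Real.rpow_add_one (ne_of_gt ht0)]
      simp only [hg, he]; ring
    · exact (ContinuousOn.rpow_const continuousOn_id
        (fun t _ => Or.inr (by linarith))).intervalIntegrable
    · exact (ContinuousOn.mul continuousOn_const (ContinuousOn.rpow_const continuousOn_id
        (fun t _ => Or.inr (by linarith)))).intervalIntegrable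
  have hI1 : ∫ t in x..(x+2), t ^ (α-1) = ((x+2) ^ α - x ^ α) / α := by
    rw [integral_rpow (Or.inl (by linarith)), show α - 1 + 1 = α from by ring]
  have hI2 : ∫ t in x..(x+2), t ^ (α-2) = ((x+2) ^ (α-1) - x ^ (α-1)) / (α-1) := by
    rw [integral_rpow (Or.inl (by linarith)), show α - 2 + 1 = α - 1 from by ring]
  rw [hcongr, hI1, hI2, sub_nonneg, mul_div_assoc', div_le_div_iff₀ hα1 hα0] at htotal
  nlinarith [htotal]

theorem f_decreasing (α : ℝ) (hα : 2 ≤ α) :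
    (AntitoneOn (fun x : ℝ => ((x + 2) ^ α - x ^ α) / (x + 1) ^ (α - 1)) (Set.Ioi 0)) ∧
    (∀ n : ℕ, 1 ≤ n →
      (((n : ℝ) + 2) ^ α - (n : ℝ) ^ α) / ((n : ℝ) + 1) ^ (α - 1) ≥
        (((n : ℝ) + 3) ^ α - ((n : ℝ) + 1) ^ α) / ((n : ℝ) + 2) ^ (α - 1)) := by
  set f : ℝ → ℝ := fun x => ((x + 2) ^ α - x ^ α) / (x + 1) ^ (α - 1) with hf
  have hderiv : ∀ x : ℝ, 0 < x → HasDerivAt f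
      (((α * (x+2) ^ (α-1) - α * x ^ (α-1)) * (x+1) ^ (α-1)
        - ((x+2) ^ α - x ^ α) * ((α-1) * (x+1) ^ (α-2))) / ((x+1) ^ (α-1)) ^ 2) x := by
    intro x hx
    have h2 : HasDerivAt (fun y : ℝ => (y + 2) ^ α) (α * (x+2) ^ (α-1)) x := by
      have := (Real.hasDerivAt_rpow_const (x := x + 2) (p := α)
        (Or.inl (by positivity))).comp x ((hasDerivAt_id x).add_const 2)
      simpa [Function.comp_def] using this
    have h0 : HasDerivAt (fun y : ℝ => y ^ α) (α * x ^ (α-1)) x :=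
      Real.hasDerivAt_rpow_const (Or.inl (ne_of_gt hx))
    have hd : HasDerivAt (fun y : ℝ => (y + 1) ^ (α-1)) ((α-1) * (x+1) ^ (α-2)) x := by
      have := (Real.hasDerivAt_rpow_const (x := x + 1) (p := α-1)
        (Or.inl (by positivity))).comp x ((hasDerivAt_id x).add_const 1)
      have e : α - 1 - 1 = α - 2 := by ring
      simpa [e, Function.comp_def] using this
    have hne : (x+1) ^ (α-1) ≠ 0 := by positivity
    exact (h2.sub h0).div hd hne
  have hanti : AntitoneOn f (Set.Ioi 0) := by
    apply antitoneOn_of_deriv_nonpos (convex_Ioi 0)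
    · intro x hx
      exact ((hderiv x hx).differentiableAt.continuousAt).continuousWithinAt
    · rw [interior_Ioi]
      intro x hx
      exact (hderiv x hx).differentiableAt.differentiableWithinAt
    · rw [interior_Ioi]
      intro x hx
      have hx0 : (0:ℝ) < x := hx
      rw [(hderiv x hx).deriv]
      apply div_nonpos_of_nonpos_of_nonneg _ (by positivity)
      rw [sub_nonpos]
      have hx1 : (0:ℝ) < x + 1 := by linarith
      have hsplit : (x+1) ^ (α-1) = (x+1) ^ (α-2) * (x+1) := by
        rw [show α - 1 = α - 2 + 1 from by ring, Real.rpow_add_one (ne_of_gt hx1)]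
      have hkey := key_ineq α x hα hx
      have hP : (0:ℝ) ≤ (x+1) ^ (α-2) := by positivity
      rw [hsplit]
      nlinarith [mul_le_mul_of_nonneg_right hkey hP]
  refine ⟨hanti, ?_⟩
  intro n hn
  have hn0 : (0:ℝ) < (n:ℝ) := by exact_mod_cast Nat.lt_of_lt_of_le Nat.zero_lt_one hn
  have h := hanti (Set.mem_Ioi.mpr hn0) (Set.mem_Ioi.mpr (by linarith : (0:ℝ) < (n:ℝ)+1))
    (by linarith : (n:ℝ) ≤ (n:ℝ)+1)
  simp only [hf] at h
  rw [show (n:ℝ)+1+2 = (n:ℝ)+3 from by ring, show (n:ℝ)+1+1 = (n:ℝ)+2 from by ring] at h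
  exact h
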